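/- Quantitative reverse doubling for A_{p,q} weights: Let 1 < p ≤ q < ∞ and let w ∈ A_{p,q} be a weight with w > 0 on a set of positive measure. Then there is a constant c > 0, depending only on n and q, such that for every cube Q ⊂ ℝⁿ, (∫_Q w^q dx)/(∫_{2Q} w^q dx) ≤ 1 − c [w]_{A_{p,q}}^{-1}, where 2Q is the cube concentric with Q of twice the side length. -/

import Mathlib

open MeasureTheory ENNReal Set

noncomputable section

/-- Euclidean space `ℝⁿ`. -/
abbrev Euc (n : ℕ) := EuclideanSpace ℝ (Fin n)

variable {n : ℕ}

/-- The axis-parallel closed cube with lower corner `a` and side length `h`. -/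
def Cube (a : Euc n) (h : ℝ) : Set (Euc n) :=
  {x | ∀ i, a i ≤ x i ∧ x i ≤ a i + h}

/-- The weighted measure `u(E) = ∫_E u dx` of a set. -/
def wMeas (u : Euc n → ℝ) (E : Set (Euc n)) : ℝ≥0∞ :=
  ∫⁻ x in E, ENNReal.ofReal (u x)

/-- The dual exponent `p' = p/(p-1)`. -/
def dualExp (p : ℝ) : ℝ := p / (p - 1)

/-- The `A_{p,q}` constant of a weight `w` (with the `A_{1,q}` convention when `p = 1`). -/
def Apq (p q : ℝ) (w : Euc n → ℝ) : ℝ≥0∞ :=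
  ⨆ (a : Euc n) (h : ℝ) (_ : 0 < h),
    ((volume (Cube a h))⁻¹ * ∫⁻ x in Cube a h, ENNReal.ofReal (w x) ^ q) *
      (if p = 1 then
        (essSup (fun x => (ENNReal.ofReal (w x))⁻¹) (volume.restrict (Cube a h))) ^ q
      else
        ((volume (Cube a h))⁻¹ * ∫⁻ x in Cube a h,
            ENNReal.ofReal (w x) ^ (-(dualExp p))) ^ (q / dualExp p))

/-- The weighted Lebesgue norm `‖w f‖_{L^p(ℝⁿ)}`. -/
def wLp (w f : Euc n → ℝ) (p : ℝ) : ℝ≥0∞ :=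
  (∫⁻ x, (ENNReal.ofReal (w x) * ENNReal.ofReal |f x|) ^ p) ^ (1 / p)

/-- The weighted Lebesgue norm `‖w g‖_{L^q(ℝⁿ)}` of an `ℝ≥0∞`-valued function. -/
def wLpE (w : Euc n → ℝ) (g : Euc n → ℝ≥0∞) (q : ℝ) : ℝ≥0∞ :=
  (∫⁻ x, (ENNReal.ofReal (w x) * g x) ^ q) ^ (1 / q)

/-- The weak norm `‖g‖_{L^{q,∞}(u)} = sup_{λ>0} λ u({|g|>λ})^{1/q}`. -/
def weakLp (u : Euc n → ℝ) (g : Euc n → ℝ) (q : ℝ) : ℝ≥0∞ :=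
  ⨆ (t : ℝ) (_ : 0 < t), ENNReal.ofReal t * wMeas u {x | t < |g x|} ^ (1 / q)

/-- The weak norm of an `ℝ≥0∞`-valued function. -/
def weakLpE (u : Euc n → ℝ) (g : Euc n → ℝ≥0∞) (q : ℝ) : ℝ≥0∞ :=
  ⨆ (t : ℝ) (_ : 0 < t), ENNReal.ofReal t * wMeas u {x | ENNReal.ofReal t < g x} ^ (1 / q)

/-- The fractional integral (Riesz potential) `I_α f(x) = ∫ |f(y)| |x-y|^{α-n} dy`. -/
def riesz (α : ℝ) (f : Euc n → ℝ) (x : Euc n) : ℝ≥0∞ :=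
  ∫⁻ y, ENNReal.ofReal |f y| * ENNReal.ofReal (‖x - y‖ ^ (α - (n : ℝ)))

/-- The fractional maximal operator `M_α f(x) = sup_{Q ∋ x} |Q|^{α/n-1} ∫_Q |f|`. -/
def fracMax (α : ℝ) (f : Euc n → ℝ) (x : Euc n) : ℝ≥0∞ :=
  ⨆ (a : Euc n) (h : ℝ) (_ : 0 < h) (_ : x ∈ Cube a h),
    volume (Cube a h) ^ (α / (n : ℝ) - 1) * ∫⁻ y in Cube a h, ENNReal.ofReal |f y|


lemma cube_eq_preimage (a : Euc n) (h : ℝ) :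
    Cube a h = (MeasurableEquiv.toLp 2 (Fin n → ℝ)).symm ⁻¹'
      (Set.pi univ fun i => Icc (a i) (a i + h)) := by
  ext x
  simp [Cube, Set.mem_pi, Icc]

lemma cube_measurable (a : Euc n) (h : ℝ) : MeasurableSet (Cube a h) := by
  rw [cube_eq_preimage]
  exact (MeasurableEquiv.toLp 2 (Fin n → ℝ)).symm.measurable
    (MeasurableSet.univ_pi fun i => measurableSet_Icc)

lemma cube_volume (a : Euc n) (h : ℝ) (hh : 0 ≤ h) :
    volume (Cube a h) = ENNReal.ofReal h ^ n := by
  rw [cube_eq_preimage,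
    (EuclideanSpace.volume_preserving_symm_measurableEquiv_toLp (Fin n)).measure_preimage
      (MeasurableSet.univ_pi fun i => measurableSet_Icc).nullMeasurableSet,
    volume_pi_pi]
  simp [Real.volume_Icc]

lemma cube_convex (a : Euc n) (h : ℝ) : Convex ℝ (Cube a h) := by
  intro x hx y hy s t hs ht hst
  intro i
  have hxi := hx i; have hyi := hy i
  have : (s • x + t • y) i = s * x i + t * y i := rfl
  rw [this]
  have key : ∀ c : ℝ, s * c + t * c = c := fun c => by rw [← add_mul, hst, one_mul]
  constructor
  · calc a i = s * a i + t * a i := (key _).symm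
      _ ≤ s * x i + t * y i := by
          gcongr <;> [exact hxi.1; exact hyi.1]
  · calc s * x i + t * y i ≤ s * (a i + h) + t * (a i + h) := by
          gcongr <;> [exact hxi.2; exact hyi.2]
      _ = a i + h := key _

lemma cube_inter_null (hn : 0 < n) (a : Euc n) (h : ℝ) (hh : 0 < h) :
    volume (Cube a h ∩
      Cube (WithLp.toLp 2 (fun i => if i = (⟨0, hn⟩ : Fin n) then a i + h else a i)) (h / 2)) = 0 := by
  set i0 : Fin n := ⟨0, hn⟩
  have hsub : Cube a h ∩
      Cube (WithLp.toLp 2 (fun i => if i = i0 then a i + h else a i)) (h / 2) ⊆ frontier (Cube a h) := by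
    rintro x ⟨hx1, hx2⟩
    have hxc : x i0 = a i0 + h := by
      have h1 := (hx1 i0).2
      have h2 := (hx2 i0).1
      simp only [WithLp.ofLp_toLp, if_pos rfl, if_true] at h2
      linarith
    rw [frontier, mem_diff]
    refine ⟨subset_closure hx1, fun hint => ?_⟩
    rw [mem_interior_iff_mem_nhds, Metric.mem_nhds_iff] at hint
    obtain ⟨ε, hε, hball⟩ := hint
    have hy : x + EuclideanSpace.single i0 (ε / 2) ∈ Cube a h := by
      apply hball
      rw [Metric.mem_ball, dist_eq_norm]
      have : x + EuclideanSpace.single i0 (ε / 2) - x = EuclideanSpace.single i0 (ε / 2) := by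
        abel
      rw [this, EuclideanSpace.norm_single, Real.norm_eq_abs, abs_of_pos (by linarith : (0:ℝ) < ε/2)]
      linarith
    have := (hy i0).2
    have hyi : (x + EuclideanSpace.single i0 (ε / 2)) i0 = x i0 + ε / 2 := by
      simp [EuclideanSpace.single_apply]
    rw [hyi] at this
    linarith [hxc ▸ this]
  exact measure_mono_null hsub ((cube_convex a h).addHaar_frontier volume)


lemma dualExp_conj {p : ℝ} (hp : 1 < p) : p.HolderConjugate (dualExp p) :=
  Real.HolderConjugate.conjExponent hp

lemma dualExp_le_dualExp {p q : ℝ} (hp : 1 < p) (hpq : p ≤ q) :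
    dualExp q ≤ dualExp p := by
  have hq : 1 < q := lt_of_lt_of_le hp hpq
  rw [dualExp, dualExp, div_le_div_iff₀ (by linarith) (by linarith)]
  nlinarith

-- Lyapunov: ∫ f^t over finite measure, t ≤ s
lemma lyapunov {α : Type*} [MeasurableSpace α] (μ : Measure α) {g : α → ℝ≥0∞}
    (hg : Measurable g) {t s : ℝ} (ht : 0 < t) (hts : t ≤ s) :
    ∫⁻ x, g x ^ t ∂μ ≤ (∫⁻ x, g x ^ s ∂μ) ^ (t / s) * (μ univ) ^ (1 - t / s) := by
  have hs : 0 < s := lt_of_lt_of_le ht hts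
  rcases eq_or_lt_of_le hts with rfl | hlt
  · rw [div_self hs.ne', ENNReal.rpow_one, sub_self, ENNReal.rpow_zero, mul_one]
  · set r : ℝ := s / t with hr
    have hr1 : 1 < r := by rw [hr]; rw [lt_div_iff₀ ht]; linarith
    have hconj : r.HolderConjugate (Real.conjExponent r) :=
      Real.HolderConjugate.conjExponent hr1
    have := ENNReal.lintegral_mul_le_Lp_mul_Lq μ hconj
      ((hg.pow_const t).aemeasurable) (aemeasurable_const (b := (1:ℝ≥0∞)))
    simp only [Pi.mul_apply, mul_one, ENNReal.one_rpow, lintegral_const, one_mul] at this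
    calc ∫⁻ x, g x ^ t ∂μ ≤ (∫⁻ x, (g x ^ t) ^ r ∂μ) ^ (1 / r) * (μ univ) ^ (1 / Real.conjExponent r) := this
    _ = (∫⁻ x, g x ^ s ∂μ) ^ (t / s) * (μ univ) ^ (1 - t / s) := by
        congr 2
        · congr 1; ext x
          rw [← ENNReal.rpow_mul]
          congr 1
          rw [hr]; field_simp [ht.ne']
        · rw [hr]; field_simp
        · have h1 := hconj.inv_add_inv_eq_one
          have : 1 / r = t / s := by rw [hr]; field_simp
          rw [one_div] at this ⊢
          linarith

/-- Key comparison: for `E ⊆ R` (R a set of finite positive measure),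
`|E|^q σ(R) ≤ A |R|^q σ(E)` given the `A_{p,q}`-type bound on `R`. -/
lemma key_estimate {p q : ℝ} (hp : 1 < p) (hpq : p ≤ q) (hq : 1 < q)
    {w : Euc n → ℝ} (hw : Measurable w)
    {R : Set (Euc n)} (hR : MeasurableSet R) (hR0 : volume R ≠ 0) (hRt : volume R ≠ ⊤)
    (hwpos : ∀ᵐ x ∂(volume.restrict R), 0 < w x)
    {A : ℝ≥0∞}
    (hA : ((volume R)⁻¹ * ∫⁻ x in R, ENNReal.ofReal (w x) ^ q) *
        ((volume R)⁻¹ * ∫⁻ x in R, ENNReal.ofReal (w x) ^ (-(dualExp p))) ^ (q / dualExp p) ≤ A)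
    {E : Set (Euc n)} (hE : MeasurableSet E) (hER : E ⊆ R) :
    volume E ^ q * (∫⁻ x in R, ENNReal.ofReal (w x) ^ q) ≤
      A * volume R ^ q * (∫⁻ x in E, ENNReal.ofReal (w x) ^ q) := by
  set f : Euc n → ℝ≥0∞ := fun x => ENNReal.ofReal (w x) with hf
  have hfm : Measurable f := ENNReal.measurable_ofReal.comp hw
  set s : ℝ := dualExp p with hsdef
  set t : ℝ := dualExp q with htdef
  have hts : t ≤ s := dualExp_le_dualExp hp hpq
  have hconjq : q.HolderConjugate t := dualExp_conj hq
  have ht1 : 1 < t := hconjq.symm.lt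
  have hq0 : (0:ℝ) < q := by linarith
  have ht0 : (0:ℝ) < t := by linarith
  have hs0 : (0:ℝ) < s := lt_of_lt_of_le ht0 hts
  set σE : ℝ≥0∞ := ∫⁻ x in E, f x ^ q with hσE
  set σR : ℝ≥0∞ := ∫⁻ x in R, f x ^ q with hσR
  set I : ℝ≥0∞ := ∫⁻ x in R, f x ^ (-s) with hI
  set N : ℝ≥0∞ := ∫⁻ x in R, f x ^ (-t) with hN
  -- Step A : |E| ≤ σE^{1/q} * N'^{1/t} with N' over E, ≤ N
  have stepA : volume E ≤ σE ^ (1/q) * N ^ (1/t) := by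
    have hae : ∀ᵐ x ∂(volume.restrict E), (1:ℝ≥0∞) = f x * (f x)⁻¹ := by
      filter_upwards [ae_restrict_of_ae_restrict_of_subset hER hwpos] with x hx
      rw [ENNReal.mul_inv_cancel (ENNReal.ofReal_pos.mpr hx).ne'
        ENNReal.ofReal_ne_top]
    have h1 : volume E = ∫⁻ x in E, f x * (f x)⁻¹ := by
      rw [← setLIntegral_one]
      exact lintegral_congr_ae hae
    have hH := ENNReal.lintegral_mul_le_Lp_mul_Lq (volume.restrict E) hconjq
      hfm.aemeasurable hfm.inv.aemeasurable
    simp only [Pi.mul_apply] at hH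
    rw [h1]
    refine le_trans hH (mul_le_mul' ?_ ?_)
    · exact le_rfl
    · refine ENNReal.rpow_le_rpow ?_ (by positivity)
      refine le_trans (le_of_eq ?_) (lintegral_mono_set hER)
      apply lintegral_congr
      intro x
      rw [Pi.inv_apply, ENNReal.inv_rpow, ← ENNReal.rpow_neg]
  -- Step C : N ≤ I^{t/s} * |R|^{1-t/s}
  have stepC : N ≤ I ^ (t/s) * (volume R) ^ (1 - t/s) := by
    have := lyapunov (volume.restrict R) (g := fun x => (f x)⁻¹) hfm.inv ht0 hts
    simp only [Measure.restrict_apply_univ] at this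
    calc N = ∫⁻ x in R, ((f x)⁻¹) ^ t := by
          apply lintegral_congr; intro x
          rw [ENNReal.inv_rpow, ← ENNReal.rpow_neg]
      _ ≤ (∫⁻ x in R, ((f x)⁻¹) ^ s) ^ (t/s) * (volume R) ^ (1 - t/s) := this
      _ = I ^ (t/s) * (volume R) ^ (1 - t/s) := by
          congr 2
          apply lintegral_congr; intro x
          rw [ENNReal.inv_rpow, ← ENNReal.rpow_neg]
  -- Step D : |E|^q ≤ σE * I^{q/s} * |R|^{(1-t/s)(q/t)}
  have stepD : volume E ^ q ≤ σE * (I ^ (q/s) * (volume R) ^ ((1 - t/s)*(q/t))) := by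
    calc volume E ^ q ≤ (σE ^ (1/q) * N ^ (1/t)) ^ q :=
          ENNReal.rpow_le_rpow stepA hq0.le
      _ = σE * N ^ (q/t) := by
          rw [ENNReal.mul_rpow_of_nonneg _ _ hq0.le, ← ENNReal.rpow_mul, ← ENNReal.rpow_mul,
            one_div_mul_cancel hq0.ne', ENNReal.rpow_one]
          congr 2
          field_simp
      _ ≤ σE * (I ^ (t/s) * (volume R) ^ (1 - t/s)) ^ (q/t) := by
          exact mul_le_mul' le_rfl (ENNReal.rpow_le_rpow stepC (by positivity))
      _ = σE * (I ^ (q/s) * (volume R) ^ ((1 - t/s)*(q/t))) := by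
          rw [ENNReal.mul_rpow_of_nonneg _ _ (by positivity), ← ENNReal.rpow_mul,
            ← ENNReal.rpow_mul]
          congr 3
          field_simp
  -- Step E : σR * I^{q/s} ≤ A * |R|^{1 + q/s}
  have stepE : σR * I ^ (q/s) ≤ A * (volume R) ^ (1 + q/s) := by
    have hE1 : σR * I ^ (q/s) =
        (((volume R)⁻¹ * σR) * ((volume R)⁻¹ * I) ^ (q / s)) * (volume R) ^ (1 + q/s) := by
      rw [ENNReal.mul_rpow_of_nonneg _ _ (by positivity),
        ENNReal.rpow_add _ _ hR0 hRt, ENNReal.rpow_one]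
      rw [show ((volume R)⁻¹ * σR) * (((volume R)⁻¹) ^ (q/s) * I ^ (q/s)) *
          (volume R * (volume R) ^ (q/s)) =
          (((volume R)⁻¹ * volume R) * (((volume R)⁻¹) ^ (q/s) * (volume R) ^ (q/s))) *
            (σR * I ^ (q/s)) by ring]
      rw [ENNReal.inv_mul_cancel hR0 hRt, ← ENNReal.mul_rpow_of_nonneg _ _ (by positivity),
        ENNReal.inv_mul_cancel hR0 hRt, ENNReal.one_rpow, one_mul, one_mul]
    rw [hE1]
    exact mul_le_mul_left hA _
  -- combine
  calc volume E ^ q * σR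
      ≤ (σE * (I ^ (q/s) * (volume R) ^ ((1 - t/s)*(q/t)))) * σR :=
        mul_le_mul_left stepD _
    _ = σE * (volume R) ^ ((1 - t/s)*(q/t)) * (σR * I ^ (q/s)) := by ring
    _ ≤ σE * (volume R) ^ ((1 - t/s)*(q/t)) * (A * (volume R) ^ (1 + q/s)) :=
        mul_le_mul_right stepE _
    _ = A * ((volume R) ^ ((1 - t/s)*(q/t)) * (volume R) ^ (1 + q/s)) * σE := by ring
    _ = A * volume R ^ q * σE := by
        rw [← ENNReal.rpow_add _ _ hR0 hRt]
        congr 2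
        have h1t : 1/t = 1 - 1/q := by
          have := hconjq.inv_add_inv_eq_one
          simp only [one_div]
          linarith
        have : (1 - t/s)*(q/t) + (1 + q/s) = q * (1/t) + 1 := by field_simp; ring
        rw [this, h1t]
        field_simp
        rw [sub_add_cancel]

/-- Quantitative reverse doubling for `A_{p,q}` weights (Lemma 5.1): for every
cube `Q`, `w^q(Q)/w^q(2Q) ≤ 1 - c [w]_{A_{p,q}}⁻¹`, where `2Q` is the concentric
double of `Q`.  The constant `c` depends only on `n` and `q`. -/
theorem Apq_reverse_doubling
    (n : ℕ) (hn : 0 < n) (q : ℝ) (hq : 1 < q) :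
    ∃ c : ℝ, 0 < c ∧ ∀ p : ℝ, 1 < p → p ≤ q → ∀ w : Euc n → ℝ,
      Measurable w → (∀ x, 0 ≤ w x) →
      Apq p q w < ⊤ → 0 < volume {x : Euc n | 0 < w x} →
      ∀ (a : Euc n) (h : ℝ), 0 < h →
        (∫⁻ x in Cube a h, ENNReal.ofReal (w x) ^ q) /
            (∫⁻ x in Cube (WithLp.toLp 2 (fun i => a i - h / 2) : Euc n) (2 * h), ENNReal.ofReal (w x) ^ q) ≤
          1 - ENNReal.ofReal c * (Apq p q w)⁻¹ := by
  have hq0 : (0:ℝ) < q := by linarith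
  refine ⟨(1/4 : ℝ) ^ ((n:ℝ) * q), Real.rpow_pos_of_pos (by norm_num) _, ?_⟩
  set c : ℝ := (1/4 : ℝ) ^ ((n:ℝ) * q) with hcdef
  intro p hp hpq w hw hw0 hApq _hwsupp a h hh
  set f : Euc n → ℝ≥0∞ := fun x => ENNReal.ofReal (w x) with hfdef
  have hfm : Measurable f := ENNReal.measurable_ofReal.comp hw
  set s : ℝ := dualExp p with hsdef
  have hs0 : (0:ℝ) < s := by
    rw [hsdef, dualExp]
    exact div_pos (by linarith) (by linarith)
  set aR : Euc n := (WithLp.toLp 2 (fun i => a i - h / 2) : Euc n) with haR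
  set R : Set (Euc n) := Cube aR (2 * h) with hRdef
  set σ : Set (Euc n) → ℝ≥0∞ := fun E => ∫⁻ x in E, f x ^ q with hσdef
  have hQR : Cube a h ⊆ R := by
    intro x hx i
    have := hx i
    have haRi : aR i = a i - h / 2 := rfl
    constructor <;> rw [haRi] <;> linarith [this.1, this.2]
  by_cases hσR0 : σ R = 0
  · have : σ (Cube a h) = 0 := by
      refine le_antisymm ?_ (zero_le)
      rw [← hσR0]
      exact lintegral_mono_set hQR
    rw [hσdef] at this
    rw [show (∫⁻ x in Cube a h, ENNReal.ofReal (w x) ^ q) = 0 from this, ENNReal.zero_div]  -- LHS is σQ / σR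
    exact zero_le
  -- main case
  set i0 : Fin n := ⟨0, hn⟩ with hi0
  set a' : Euc n := (WithLp.toLp 2 (fun i => if i = i0 then a i + h else a i) : Euc n) with ha'
  set Q' : Set (Euc n) := Cube a' (h / 2) with hQ'def
  have hQ'R : Q' ⊆ R := by
    intro x hx i
    have hxi := hx i
    have haRi : aR i = a i - h / 2 := rfl
    have ha'i : a' i = if i = i0 then a i + h else a i := rfl
    rw [ha'i] at hxi
    by_cases hii : i = i0 <;> simp only [hii, if_true, if_false] at hxi <;>
      constructor <;> rw [haRi] <;> simp only [hii] <;> linarith [hxi.1, hxi.2]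
  have hvolR : volume R = ENNReal.ofReal (2 * h) ^ n := cube_volume aR (2 * h) (by linarith)
  have hvolR0 : volume R ≠ 0 := by
    rw [hvolR]
    exact pow_ne_zero n (by simp [ENNReal.ofReal_pos]; linarith)
  have hvolRt : volume R ≠ ⊤ := by
    rw [hvolR]
    exact ENNReal.pow_ne_top ENNReal.ofReal_ne_top
  set I : ℝ≥0∞ := ∫⁻ x in R, f x ^ (-s) with hIdef
  -- the Apq bound for the cube R
  have hle : ((volume R)⁻¹ * σ R) * ((volume R)⁻¹ * I) ^ (q / s) ≤ Apq p q w := by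
    have h2 : (0:ℝ) < 2 * h := by linarith
    have := le_iSup_of_le (f := fun (a : Euc n) => ⨆ (h : ℝ) (_ : 0 < h),
      ((volume (Cube a h))⁻¹ * ∫⁻ x in Cube a h, ENNReal.ofReal (w x) ^ q) *
      (if p = 1 then
        (essSup (fun x => (ENNReal.ofReal (w x))⁻¹) (volume.restrict (Cube a h))) ^ q
      else
        ((volume (Cube a h))⁻¹ * ∫⁻ x in Cube a h,
            ENNReal.ofReal (w x) ^ (-(dualExp p))) ^ (q / dualExp p))) aR
      (le_iSup_of_le (2 * h) (le_iSup_of_le h2 le_rfl))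
    rw [if_neg (by intro h1; rw [h1] at hp; exact lt_irrefl 1 hp)] at this
    exact this
  have hI0 : I ≠ 0 := by
    have hsupp : Function.support (fun x => f x ^ (-s)) = univ := by
      ext x
      simp only [Function.mem_support, mem_univ, iff_true]
      intro h0
      rcases ENNReal.rpow_eq_zero_iff.mp h0 with ⟨_, h2⟩ | ⟨h1, _⟩
      · linarith
      · exact ENNReal.ofReal_ne_top h1
    have : 0 < I := by
      rw [hIdef, lintegral_pos_iff_support (hfm.pow_const (-s)), hsupp,
        Measure.restrict_apply_univ]
      exact pos_iff_ne_zero.mpr hvolR0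
    exact this.ne'
  have hqs0 : (0:ℝ) < q / s := div_pos hq0 hs0
  have hIt : I ≠ ⊤ := by
    intro hIt
    rw [hIt, ENNReal.mul_top (ENNReal.inv_ne_zero.mpr hvolRt),
      ENNReal.top_rpow_of_pos hqs0,
      ENNReal.mul_top (by exact mul_ne_zero (ENNReal.inv_ne_zero.mpr hvolRt) hσR0)] at hle
    exact (hApq.trans_le (le_of_eq rfl)).ne (top_le_iff.mp hle)
  have hσRt : σ R ≠ ⊤ := by
    intro hσRt
    rw [hσRt, ENNReal.mul_top (ENNReal.inv_ne_zero.mpr hvolRt),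
      ENNReal.top_mul (by
        rw [Ne, ENNReal.rpow_eq_zero_iff_of_pos hqs0]
        exact mul_ne_zero (ENNReal.inv_ne_zero.mpr hvolRt) hI0)] at hle
    exact hApq.ne (top_le_iff.mp hle)
  have hA0 : Apq p q w ≠ 0 := by
    refine (lt_of_lt_of_le ?_ hle).ne'
    apply ENNReal.mul_pos
    · exact mul_ne_zero (ENNReal.inv_ne_zero.mpr hvolRt) hσR0
    · rw [Ne, ENNReal.rpow_eq_zero_iff_of_pos hqs0]
      exact mul_ne_zero (ENNReal.inv_ne_zero.mpr hvolRt) hI0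
  have hwpos : ∀ᵐ x ∂(volume.restrict R), 0 < w x := by
    have hae := ae_lt_top (μ := volume.restrict R) (hfm.pow_const (-s)) (by rw [← hIdef]; exact hIt)
    filter_upwards [hae] with x hx
    rcases lt_or_eq_of_le (hw0 x) with hlt | heq
    · exact hlt
    · exfalso
      have : f x = 0 := by rw [hfdef]; simp [← heq]
      rw [this, ENNReal.zero_rpow_of_neg (by linarith)] at hx
      exact (lt_irrefl _ hx)
  -- apply key estimate with E = Q'
  have hkey := key_estimate hp hpq hq hw (cube_measurable aR (2*h)) hvolR0 hvolRt hwpos hle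
    (cube_measurable a' (h/2)) hQ'R
  -- volume computations
  have hvolQ' : volume Q' = ENNReal.ofReal (h / 2) ^ n := cube_volume a' (h / 2) (by linarith)
  have h14 : (ENNReal.ofReal (1/4) ^ n) ^ q = ENNReal.ofReal c := by
    calc (ENNReal.ofReal (1/4) ^ n) ^ q
        = (ENNReal.ofReal (1/4) ^ (n:ℝ)) ^ q := by rw [ENNReal.rpow_natCast]
      _ = ENNReal.ofReal (1/4) ^ ((n:ℝ) * q) := (ENNReal.rpow_mul _ _ _).symm
      _ = ENNReal.ofReal ((1/4:ℝ) ^ ((n:ℝ) * q)) := by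
          rw [ENNReal.ofReal_rpow_of_pos (by norm_num)]
      _ = ENNReal.ofReal c := rfl
  have hc : volume Q' ^ q = ENNReal.ofReal c * volume R ^ q := by
    rw [hvolQ', hvolR,
      show ENNReal.ofReal (h / 2) = ENNReal.ofReal (1/4) * ENNReal.ofReal (2 * h) by
        rw [← ENNReal.ofReal_mul (by norm_num)]; congr 1; ring,
      mul_pow, ENNReal.mul_rpow_of_nonneg _ _ hq0.le, h14]
  have hAt : Apq p q w ≠ ⊤ := hApq.ne
  -- from hkey : volQ'^q * σR ≤ A * volR^q * σQ'
  have hX : ENNReal.ofReal c * (Apq p q w)⁻¹ * σ R ≤ σ Q' := by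
    have h1 : (Apq p q w)⁻¹ * (volume Q' ^ q * σ R) ≤
        (Apq p q w)⁻¹ * (Apq p q w * volume R ^ q * σ Q') := mul_le_mul_right hkey _
    rw [show (Apq p q w)⁻¹ * (Apq p q w * volume R ^ q * σ Q') =
        ((Apq p q w)⁻¹ * Apq p q w) * (volume R ^ q * σ Q') by ring,
      ENNReal.inv_mul_cancel hA0 hAt, one_mul, hc] at h1
    rw [show (Apq p q w)⁻¹ * (ENNReal.ofReal c * volume R ^ q * σ R) =
        volume R ^ q * (ENNReal.ofReal c * (Apq p q w)⁻¹ * σ R) by ring] at h1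
    rw [show volume R ^ q * σ Q' = volume R ^ q * (σ Q') by ring] at h1
    exact (ENNReal.mul_le_mul_iff_right
      (by rw [Ne, ENNReal.rpow_eq_zero_iff_of_pos hq0]; exact hvolR0)
      (ENNReal.rpow_ne_top_of_nonneg hq0.le hvolRt)).mp h1
  -- sum bound via withDensity measure
  have hsum : σ (Cube a h) + σ Q' ≤ σ R := by
    set ν : Measure (Euc n) := volume.withDensity (fun x => f x ^ q) with hν
    have hνE : ∀ E : Set (Euc n), MeasurableSet E → ν E = σ E := fun E hE =>
      withDensity_apply _ hE
    have hinter : ν (Cube a h ∩ Q') = 0 :=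
      measure_mono_null (le_refl _) ((withDensity_absolutelyContinuous volume _)
        (cube_inter_null hn a h hh))
    have := measure_union_add_inter (μ := ν) (Cube a h) (cube_measurable a' (h/2))
    rw [hinter, add_zero] at this
    calc σ (Cube a h) + σ Q' = ν (Cube a h) + ν Q' := by
          rw [hνE _ (cube_measurable a h), hνE _ (cube_measurable a' (h/2))]
      _ = ν (Cube a h ∪ Q') := this.symm
      _ ≤ ν R := measure_mono (union_subset hQR hQ'R)
      _ = σ R := hνE _ (cube_measurable aR (2*h))
  -- conclude
  have hfinal : σ (Cube a h) ≤ σ R - (ENNReal.ofReal c * (Apq p q w)⁻¹) * σ R := by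
    apply ENNReal.le_sub_of_add_le_right
      (ne_top_of_le_ne_top hσRt (hX.trans (lintegral_mono_set hQ'R)))
    calc σ (Cube a h) + ENNReal.ofReal c * (Apq p q w)⁻¹ * σ R
        ≤ σ (Cube a h) + σ Q' := add_le_add_right hX _
      _ ≤ σ R := hsum
  calc σ (Cube a h) / σ R
      ≤ (σ R - ENNReal.ofReal c * (Apq p q w)⁻¹ * σ R) / σ R :=
        ENNReal.div_le_div_right hfinal _
    _ = ((1 - ENNReal.ofReal c * (Apq p q w)⁻¹) * σ R) / σ R := by
        rw [ENNReal.sub_mul (fun _ _ => hσRt), one_mul]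
    _ = 1 - ENNReal.ofReal c * (Apq p q w)⁻¹ := by
        rw [div_eq_mul_inv, mul_assoc, ENNReal.mul_inv_cancel hσR0 hσRt, mul_one]

end
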